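/- Let L ≥ 1 and let Y be an analytic metric space (there exist a complete separable metric space Z and a continuous surjection g : Z → Y) that is L-Lipschitz connected (for all x,y ∈ Y there is an L-Lipschitz map f : [0, d_Y(x,y)] → Y with f(0) = x and f(d_Y(x,y)) = y). If there exists a surjective Lipschitz map f : Y → X onto a metric space X, then X is analytic, Lipschitz connected, and the intrinsic metric d_IX of X is separable, i.e. there is a countable set D ⊆ X such that for every x ∈ X and ε > 0 some y ∈ D satisfies d_IX(x,y) < ε. -/
import Mathlib


/-- The metric segment `[x,z] = {y : d(x,y) + d(y,z) = d(x,z)}`. -/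
def MetricSegment {X : Type*} [MetricSpace X] (x z : X) : Set X :=
  {y | dist x y + dist y z = dist x z}

/-- A metric space is an ℝ-tree if every metric segment `[x,y]` is isometric to the
real interval `[0, d(x,y)]`, and `[x,y] ∩ [y,z] = {y}` implies `d(x,z) = d(x,y) + d(y,z)`. -/
def IsRTree (X : Type*) [MetricSpace X] : Prop :=
  (∀ x y : X, Nonempty ((MetricSegment x y) ≃ᵢ (Set.Icc (0:ℝ) (dist x y)))) ∧
  (∀ x y z : X, MetricSegment x y ∩ MetricSegment y z = {y} →
    dist x z = dist x y + dist y z)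

/-- A metric space `X` is injective if every 1-Lipschitz map into `X` from a subset of a
metric space extends to a 1-Lipschitz map on the whole space. -/
def IsInjectiveMetricSpace (X : Type*) [MetricSpace X] : Prop :=
  ∀ (A : Type) [MetricSpace A] (B : Set A) (f : B → X), LipschitzWith 1 f →
    ∃ g : A → X, LipschitzWith 1 g ∧ ∀ b : B, g b = f b

/-- A metric space is Lipschitz connected if any two points are joined by a Lipschitz
path `f : [0,1] → X`. -/
def LipschitzConnected (X : Type*) [MetricSpace X] : Prop :=
  ∀ x y : X, ∃ f : Set.Icc (0:ℝ) 1 → X, (∃ K : NNReal, LipschitzWith K f) ∧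
    f ⟨0, by norm_num⟩ = x ∧ f ⟨1, by norm_num⟩ = y

/-- The intrinsic metric: the infimum of Lipschitz constants of paths joining `x` and `y`. -/
noncomputable def intrinsicDist {X : Type*} [MetricSpace X] (x y : X) : ℝ :=
  sInf {K : ℝ | 0 ≤ K ∧ ∃ f : Set.Icc (0:ℝ) 1 → X,
    LipschitzWith K.toNNReal f ∧ f ⟨0, by norm_num⟩ = x ∧ f ⟨1, by norm_num⟩ = y}

/-- A metric space is analytic if it is a continuous image of a complete separable
metric space. -/
def IsAnalyticMetricSpace (X : Type*) [MetricSpace X] : Prop :=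
  ∃ (Z : Type) (_ : MetricSpace Z) (_ : CompleteSpace Z)
    (_ : TopologicalSpace.SeparableSpace Z) (g : Z → X),
      Continuous g ∧ Function.Surjective g

/-- `L`-Lipschitz connectedness: any two points `x,y` are joined by an `L`-Lipschitz
path defined on `[0, d(x,y)]`. -/
def LLipschitzConnected (L : NNReal) (Y : Type*) [MetricSpace Y] : Prop :=
  ∀ x y : Y, ∃ f : Set.Icc (0:ℝ) (dist x y) → Y, LipschitzWith L f ∧
    f ⟨0, ⟨le_refl 0, dist_nonneg⟩⟩ = x ∧ f ⟨dist x y, ⟨dist_nonneg, le_refl _⟩⟩ = y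

/-- Hyperconvexity: every family of closed balls with `d(xᵢ,xⱼ) ≤ rᵢ + rⱼ` has a
common point. -/
def Hyperconvex (X : Type*) [MetricSpace X] : Prop :=
  ∀ (I : Type) (x : I → X) (r : I → ℝ), (∀ i, 0 ≤ r i) →
    (∀ i j, dist (x i) (x j) ≤ r i + r j) →
    (⋂ i, Metric.closedBall (x i) (r i)).Nonempty

/-- Metric convexity. -/
def MetricallyConvex (X : Type*) [MetricSpace X] : Prop :=
  ∀ a b : X, ∀ t : ℝ, t ∈ Set.Icc (0:ℝ) 1 →
    ∃ x : X, dist a x = t * dist a b ∧ dist x b = (1 - t) * dist a b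

/-- Binary intersection property: every family of pairwise intersecting closed balls
has a common point. -/
def BinaryIntersectionProperty (X : Type*) [MetricSpace X] : Prop :=
  ∀ (I : Type) (x : I → X) (r : I → ℝ),
    (∀ i j, (Metric.closedBall (x i) (r i) ∩ Metric.closedBall (x j) (r j)).Nonempty) →
    (⋂ i, Metric.closedBall (x i) (r i)).Nonempty



lemma path_exists_aux {Y X : Type} [MetricSpace Y] [MetricSpace X]
    (L K : NNReal) (hY : LLipschitzConnected L Y) {f : Y → X} (hf : LipschitzWith K f)
    (a b : Y) :
    ∃ g : Set.Icc (0:ℝ) 1 → X, LipschitzWith (K * L * Real.toNNReal (dist a b)) g ∧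
      g ⟨0, by norm_num⟩ = f a ∧ g ⟨1, by norm_num⟩ = f b := by
  obtain ⟨h, hh, h0, h1⟩ := hY a b
  have hd0 : (0:ℝ) ≤ dist a b := dist_nonneg
  have hmem : ∀ t : Set.Icc (0:ℝ) 1, (t:ℝ) * dist a b ∈ Set.Icc (0:ℝ) (dist a b) := by
    intro t
    constructor
    · exact mul_nonneg t.2.1 hd0
    · calc (t:ℝ) * dist a b ≤ 1 * dist a b := mul_le_mul_of_nonneg_right t.2.2 hd0
        _ = dist a b := one_mul _
  set φ : Set.Icc (0:ℝ) 1 → Set.Icc (0:ℝ) (dist a b) := fun t => ⟨(t:ℝ) * dist a b, hmem t⟩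
    with hφ
  have hφlip : LipschitzWith (Real.toNNReal (dist a b)) φ := by
    apply LipschitzWith.of_dist_le_mul
    intro s t
    simp only [hφ, Subtype.dist_eq, Real.dist_eq]
    rw [← sub_mul, abs_mul, abs_of_nonneg hd0, Real.coe_toNNReal _ hd0]
    exact le_of_eq (mul_comm _ _)
  refine ⟨f ∘ h ∘ φ, ?_, ?_, ?_⟩
  · have := (hf.comp (hh.comp hφlip))
    rwa [mul_assoc]
  · have he : φ ⟨0, by norm_num⟩ = ⟨0, ⟨le_refl 0, dist_nonneg⟩⟩ := by
      apply Subtype.ext; simp [hφ]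
    simp only [Function.comp_apply, he, h0]
  · have he : φ ⟨1, by norm_num⟩ = ⟨dist a b, ⟨dist_nonneg, le_refl _⟩⟩ := by
      apply Subtype.ext; simp [hφ]
    simp only [Function.comp_apply, he, h1]

lemma intrinsicDist_le_aux {Y X : Type} [MetricSpace Y] [MetricSpace X]
    (L K : NNReal) (hY : LLipschitzConnected L Y) {f : Y → X} (hf : LipschitzWith K f)
    (a b : Y) : intrinsicDist (f a) (f b) ≤ (K : ℝ) * (L : ℝ) * dist a b := by
  obtain ⟨g, hg, hg0, hg1⟩ := path_exists_aux L K hY hf a b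
  have hmem : ((K * L * Real.toNNReal (dist a b) : NNReal) : ℝ) ∈
      {C : ℝ | 0 ≤ C ∧ ∃ p : Set.Icc (0:ℝ) 1 → X,
        LipschitzWith C.toNNReal p ∧ p ⟨0, by norm_num⟩ = f a ∧ p ⟨1, by norm_num⟩ = f b} := by
    refine ⟨NNReal.coe_nonneg _, g, ?_, hg0, hg1⟩
    rwa [Real.toNNReal_coe]
  have hle := csInf_le ⟨0, fun k hk => hk.1⟩ hmem
  calc intrinsicDist (f a) (f b) ≤ _ := hle
    _ = (K : ℝ) * (L : ℝ) * dist a b := by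
        push_cast
        rw [Real.coe_toNNReal _ dist_nonneg]

/-- A Lipschitz image of an `L`-Lipschitz connected analytic metric space is analytic,
Lipschitz connected, and has separable intrinsic metric. -/
theorem image_of_analytic_L_lipschitz_connected (L : NNReal) (hL : 1 ≤ L)
    (Y : Type) [MetricSpace Y] (hYan : IsAnalyticMetricSpace Y)
    (hY : LLipschitzConnected L Y)
    (X : Type) [MetricSpace X] (f : Y → X)
    (hsurj : Function.Surjective f) (hlip : ∃ K : NNReal, LipschitzWith K f) :
    IsAnalyticMetricSpace X ∧ LipschitzConnected X ∧
      ∃ D : Set X, D.Countable ∧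
        ∀ x : X, ∀ ε : ℝ, 0 < ε → ∃ y ∈ D, intrinsicDist x y < ε := by
  obtain ⟨K, hK⟩ := hlip
  obtain ⟨Z, iZ, cZ, sZ, g, hgc, hgs⟩ := hYan
  refine ⟨⟨Z, iZ, cZ, sZ, f ∘ g, hK.continuous.comp hgc, hsurj.comp hgs⟩, ?_, ?_⟩
  · intro x y
    obtain ⟨a, ha⟩ := hsurj x
    obtain ⟨b, hb⟩ := hsurj y
    obtain ⟨p, hp, hp0, hp1⟩ := path_exists_aux L K hY hK a b
    exact ⟨p, ⟨_, hp⟩, by rw [hp0, ha], by rw [hp1, hb]⟩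
  · -- separability
    have : TopologicalSpace.SeparableSpace Y := (hgs.denseRange).separableSpace hgc
    obtain ⟨s, hsc, hsd⟩ := TopologicalSpace.exists_countable_dense Y
    refine ⟨f '' s, hsc.image f, ?_⟩
    intro x ε hε
    obtain ⟨a, ha⟩ := hsurj x
    set M : ℝ := (K : ℝ) * (L : ℝ) with hM
    have hM0 : 0 ≤ M := by positivity
    have hM1 : (0:ℝ) < M + 1 := by positivity
    have hδ : 0 < ε / (M + 1) := div_pos hε hM1
    obtain ⟨c, hcs, hcd⟩ := Metric.mem_closure_iff.1 (hsd a) _ hδ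
    refine ⟨f c, Set.mem_image_of_mem f hcs, ?_⟩
    have h1 : intrinsicDist x (f c) ≤ M * dist a c := by
      rw [← ha]; exact intrinsicDist_le_aux L K hY hK a c
    have h2 : M * dist a c ≤ M * (ε / (M + 1)) :=
      mul_le_mul_of_nonneg_left hcd.le hM0
    have h3 : M * (ε / (M + 1)) < ε := by
      rw [mul_div_assoc', div_lt_iff₀ hM1]; nlinarith
    linarith
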